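/- Define f on ℝ² by f := χ_E where E is the union of the squares (0,1)×(0,1) and (1,2)×(1,2). Then the iterated rearrangement of fχ_{(0,2)×(0,2)} satisfies f^*(t,s) = 1 for t ∈ (0,1), s ∈ (0,2) and f^*(t,s) = 0 for t ∈ [1,2), s ∈ (0,2). Consequently, for λ ∈ (0,1/2] and τ ∈ (1/2,1), the iterated-rearrangement lower bound ∫_{2(1-λ)}^2 ∫_{2(1-τ)}^2 f^*(t,s) ds dt = 0 is strictly less than inf_{|E'|=2λ, |G|=2τ} ∫_{E'} ∫_G f dy dx > 0. -/

import Mathlib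

open MeasureTheory Set

/-- Non-increasing rearrangement of `g` restricted to `E`. -/
noncomputable def rearrOn {α : Type*} [MeasureSpace α] (E : Set α) (g : α → ℝ) (t : ℝ) : ℝ :=
  sInf {a : ℝ | 0 < a ∧ volume {x ∈ E | a < |g x|} ≤ ENNReal.ofReal t}

/-- Iterated non-increasing rearrangement of a function of two variables restricted to `A × B`. -/
noncomputable def rearr2On {α β : Type*} [MeasureSpace α] [MeasureSpace β]
    (A : Set α) (B : Set β) (f : α × β → ℝ) (t s : ℝ) : ℝ :=
  rearrOn B (fun y => rearrOn A (fun x => f (x, y)) t) s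

/-- The characteristic function of `((0,1)×(0,1)) ∪ ((1,2)×(1,2)) ⊂ ℝ²`. -/
noncomputable def fex : ℝ × ℝ → ℝ :=
  Set.indicator ((Ioo (0:ℝ) 1 ×ˢ Ioo (0:ℝ) 1) ∪ (Ioo (1:ℝ) 2 ×ˢ Ioo (1:ℝ) 2)) 1

lemma rearrOn_indicator_eq_one (E J : Set ℝ) (t : ℝ)
    (h : ¬ volume (E ∩ J) ≤ ENNReal.ofReal t) :
    rearrOn E (Set.indicator J 1) t = 1 := by
  unfold rearrOn
  have hset : {a : ℝ | 0 < a ∧ volume {x ∈ E | a < |Set.indicator J (1:ℝ→ℝ) x|}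
      ≤ ENNReal.ofReal t} = Ici 1 := by
    ext a
    simp only [mem_setOf_eq, mem_Ici]
    constructor
    · rintro ⟨ha, hv⟩
      by_contra hlt
      push_neg at hlt
      apply h
      refine le_trans (measure_mono ?_) hv
      rintro x ⟨hxE, hxJ⟩
      refine ⟨hxE, ?_⟩
      rw [Set.indicator_of_mem hxJ]
      simpa using hlt
    · intro h1
      refine ⟨lt_of_lt_of_le one_pos h1, ?_⟩
      have : {x ∈ E | a < |Set.indicator J (1:ℝ→ℝ) x|} = ∅ := by
        ext x
        simp only [mem_setOf_eq, mem_empty_iff_false, iff_false, not_and]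
        intro _
        have : |Set.indicator J (1:ℝ→ℝ) x| ≤ 1 := by
          by_cases hx : x ∈ J <;> simp [Set.indicator_of_mem, Set.indicator_of_notMem, hx]
        linarith [this]
      rw [this]
      simp
  rw [hset]
  exact csInf_Ici

lemma rearrOn_indicator_eq_zero (E J : Set ℝ) (t : ℝ)
    (h : volume (E ∩ J) ≤ ENNReal.ofReal t) :
    rearrOn E (Set.indicator J 1) t = 0 := by
  unfold rearrOn
  have hset : {a : ℝ | 0 < a ∧ volume {x ∈ E | a < |Set.indicator J (1:ℝ→ℝ) x|}
      ≤ ENNReal.ofReal t} = Ioi 0 := by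
    ext a
    simp only [mem_setOf_eq, mem_Ioi]
    constructor
    · exact fun h => h.1
    · intro ha
      refine ⟨ha, le_trans (measure_mono ?_) h⟩
      rintro x ⟨hxE, hx⟩
      refine ⟨hxE, ?_⟩
      by_contra hxJ
      rw [Set.indicator_of_notMem hxJ] at hx
      simp at hx
      linarith
  rw [hset]
  exact csInf_Ioi

lemma rearrOn_zero (E : Set ℝ) (t : ℝ) : rearrOn E (fun _ => 0) t = 0 := by
  have : (fun _ : ℝ => (0:ℝ)) = Set.indicator (∅ : Set ℝ) 1 := by
    funext x; simp
  rw [this, rearrOn_indicator_eq_zero]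
  simp

lemma fex_slice_y (y : ℝ) :
    (fun x => fex (x, y)) = Set.indicator
      (if y ∈ Ioo (0:ℝ) 1 then Ioo (0:ℝ) 1 else if y ∈ Ioo (1:ℝ) 2 then Ioo (1:ℝ) 2 else ∅) 1 := by
  funext x
  by_cases h1 : y ∈ Ioo (0:ℝ) 1
  · have h2 : y ∉ Ioo (1:ℝ) 2 := by simp only [mem_Ioo] at *; intro h; linarith [h1.2, h.1]
    simp [fex, Set.indicator, h1, h2, Set.mem_prod]
  · by_cases h2 : y ∈ Ioo (1:ℝ) 2
    · simp [fex, Set.indicator, h1, h2, Set.mem_prod]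
    · simp [fex, Set.indicator, h1, h2, Set.mem_prod]

lemma fex_slice_x (x : ℝ) :
    (fun y => fex (x, y)) = Set.indicator
      (if x ∈ Ioo (0:ℝ) 1 then Ioo (0:ℝ) 1 else if x ∈ Ioo (1:ℝ) 2 then Ioo (1:ℝ) 2 else ∅) 1 := by
  funext y
  by_cases h1 : x ∈ Ioo (0:ℝ) 1
  · have h2 : x ∉ Ioo (1:ℝ) 2 := by simp only [mem_Ioo] at *; intro h; linarith [h1.2, h.1]
    simp [fex, Set.indicator, h1, h2, Set.mem_prod]
  · by_cases h2 : x ∈ Ioo (1:ℝ) 2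
    · simp [fex, Set.indicator, h1, h2, Set.mem_prod]
    · simp [fex, Set.indicator, h1, h2, Set.mem_prod]

lemma vol_union2 : volume (Ioo (0:ℝ) 2 ∩ (Ioo 0 1 ∪ Ioo 1 2)) = 2 := by
  have hsub : (Ioo (0:ℝ) 1 ∪ Ioo 1 2) ⊆ Ioo 0 2 := by
    rintro x (hx | hx) <;> simp only [mem_Ioo] at * <;> constructor <;> linarith [hx.1, hx.2]
  rw [Set.inter_eq_right.2 hsub]
  have hdisj : Disjoint (Ioo (0:ℝ) 1) (Ioo 1 2) := by
    rw [Set.disjoint_iff]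
    rintro x ⟨h1, h2⟩
    simp only [mem_Ioo] at *
    linarith [h1.2, h2.1]
  rw [measure_union hdisj measurableSet_Ioo, Real.volume_Ioo, Real.volume_Ioo]
  rw [show (1:ℝ) - 0 = 1 by ring, show (2:ℝ) - 1 = 1 by ring]
  simp
  norm_num

lemma vol_inter_sub (a b : ℝ) (h : Ioo a b ⊆ Ioo (0:ℝ) 2) (hab : b - a = 1) :
    volume (Ioo (0:ℝ) 2 ∩ Ioo a b) = 1 := by
  rw [Set.inter_eq_right.2 h, Real.volume_Ioo, hab]
  simp

lemma inner_one (t : ℝ) (ht : t ∈ Ioo (0:ℝ) 1) :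
    (fun y => rearrOn (Ioo 0 2) (fun x => fex (x, y)) t)
      = Set.indicator (Ioo (0:ℝ) 1 ∪ Ioo 1 2) 1 := by
  funext y
  rw [fex_slice_y]
  have hlt : ENNReal.ofReal t < 1 := by
    rw [show (1:ENNReal) = ENNReal.ofReal 1 by simp]
    exact (ENNReal.ofReal_lt_ofReal_iff one_pos).2 ht.2
  by_cases h1 : y ∈ Ioo (0:ℝ) 1
  · rw [if_pos h1, rearrOn_indicator_eq_one, Set.indicator_of_mem (by exact Or.inl h1)]
    · rfl
    · rw [vol_inter_sub 0 1 (by intro x hx; exact ⟨hx.1, by linarith [hx.2]⟩) (by ring)]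
      exact fun hc => absurd (lt_of_le_of_lt hc hlt) (lt_irrefl _)
  · by_cases h2 : y ∈ Ioo (1:ℝ) 2
    · rw [if_neg h1, if_pos h2, rearrOn_indicator_eq_one,
        Set.indicator_of_mem (by exact Or.inr h2)]
      · rfl
      · rw [vol_inter_sub 1 2 (by intro x hx; exact ⟨by linarith [hx.1], hx.2⟩) (by ring)]
        exact fun hc => absurd (lt_of_le_of_lt hc hlt) (lt_irrefl _)
    · rw [if_neg h1, if_neg h2]
      have : y ∉ Ioo (0:ℝ) 1 ∪ Ioo 1 2 := by rintro (h|h) <;> [exact h1 h; exact h2 h]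
      rw [Set.indicator_of_notMem this]
      rw [show Set.indicator (∅:Set ℝ) (1:ℝ→ℝ) = fun _ => 0 by funext x; simp]
      exact rearrOn_zero _ _

lemma inner_zero (t : ℝ) (ht : 1 ≤ t) :
    (fun y => rearrOn (Ioo 0 2) (fun x => fex (x, y)) t) = fun _ => 0 := by
  funext y
  rw [fex_slice_y]
  have h1 : (1:ENNReal) ≤ ENNReal.ofReal t := by
    rw [show (1:ENNReal) = ENNReal.ofReal 1 by simp]
    exact ENNReal.ofReal_le_ofReal ht
  by_cases hy1 : y ∈ Ioo (0:ℝ) 1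
  · rw [if_pos hy1, rearrOn_indicator_eq_zero]
    rw [vol_inter_sub 0 1 (by intro x hx; exact ⟨hx.1, by linarith [hx.2]⟩) (by ring)]
    exact h1
  · by_cases hy2 : y ∈ Ioo (1:ℝ) 2
    · rw [if_neg hy1, if_pos hy2, rearrOn_indicator_eq_zero]
      rw [vol_inter_sub 1 2 (by intro x hx; exact ⟨by linarith [hx.1], hx.2⟩) (by ring)]
      exact h1
    · rw [if_neg hy1, if_neg hy2]
      rw [show Set.indicator (∅:Set ℝ) (1:ℝ→ℝ) = fun _ => 0 by funext x; simp]
      exact rearrOn_zero _ _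

lemma part1 (t : ℝ) (ht : t ∈ Ioo (0:ℝ) 1) (s : ℝ) (hs : s ∈ Ioo (0:ℝ) 2) :
    rearr2On (Ioo (0:ℝ) 2) (Ioo (0:ℝ) 2) fex t s = 1 := by
  unfold rearr2On
  rw [inner_one t ht, rearrOn_indicator_eq_one]
  rw [vol_union2]
  intro hc
  have : ENNReal.ofReal s < 2 := by
    rw [show (2:ENNReal) = ENNReal.ofReal 2 by norm_num]
    exact (ENNReal.ofReal_lt_ofReal_iff two_pos).2 hs.2
  exact absurd (lt_of_le_of_lt hc this) (lt_irrefl _)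

lemma part2 (t : ℝ) (ht : 1 ≤ t) (s : ℝ) :
    rearr2On (Ioo (0:ℝ) 2) (Ioo (0:ℝ) 2) fex t s = 0 := by
  unfold rearr2On
  rw [inner_zero t ht]
  exact rearrOn_zero _ _

lemma integral_ind (G J : Set ℝ) (hJ : MeasurableSet J) :
    ∫ y in G, Set.indicator J (1:ℝ→ℝ) y = (volume (G ∩ J)).toReal := by
  rw [MeasureTheory.setIntegral_indicator hJ]
  simp only [Pi.one_apply, MeasureTheory.setIntegral_const, smul_eq_mul, mul_one]
  rfl

lemma inner_int (G : Set ℝ) (x : ℝ) :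
    ∫ y in G, fex (x, y) =
      (volume (G ∩ Ioo 0 1)).toReal * Set.indicator (Ioo (0:ℝ) 1) 1 x
      + (volume (G ∩ Ioo 1 2)).toReal * Set.indicator (Ioo (1:ℝ) 2) 1 x := by
  rw [show (fun y => fex (x,y)) = _ from fex_slice_x x]
  by_cases h1 : x ∈ Ioo (0:ℝ) 1
  · have h2 : x ∉ Ioo (1:ℝ) 2 := by simp only [mem_Ioo] at *; intro h; linarith [h1.2, h.1]
    rw [if_pos h1, integral_ind _ _ measurableSet_Ioo,
      Set.indicator_of_mem h1, Set.indicator_of_notMem h2]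
    simp
  · by_cases h2 : x ∈ Ioo (1:ℝ) 2
    · rw [if_neg h1, if_pos h2, integral_ind _ _ measurableSet_Ioo,
        Set.indicator_of_mem h2, Set.indicator_of_notMem h1]
      simp
    · rw [if_neg h1, if_neg h2, Set.indicator_of_notMem h1, Set.indicator_of_notMem h2]
      simp

lemma integrable_ind_on (E J : Set ℝ) (hJ : MeasurableSet J) (hE : volume J ≠ ⊤) :
    Integrable (Set.indicator J (1:ℝ→ℝ)) (volume.restrict E) := by
  rw [MeasureTheory.integrable_indicator_iff hJ]
  refine MeasureTheory.integrableOn_const (ne_of_lt ?_)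
  rw [Measure.restrict_apply hJ]
  exact lt_of_le_of_lt (measure_mono (Set.inter_subset_left)) hE.lt_top

lemma lower_bound (lam τ : ℝ) (hlam : lam ∈ Ioc (0:ℝ) (1/2)) (hτ : τ ∈ Ioo (1/2:ℝ) 1)
    (E G : Set ℝ) (hEm : MeasurableSet E) (hEs : E ⊆ Ioo (0:ℝ) 2)
    (hEv : volume E = ENNReal.ofReal (2*lam))
    (hGm : MeasurableSet G) (hGs : G ⊆ Ioo (0:ℝ) 2)
    (hGv : volume G = ENNReal.ofReal (2*τ)) :
    2*lam*(2*τ-1) ≤ ∫ x in E, ∫ y in G, fex (x, y) := by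
  set c₁ := (volume (G ∩ Ioo 0 1)).toReal with hc₁
  set c₂ := (volume (G ∩ Ioo 1 2)).toReal with hc₂
  have key : (∫ x in E, ∫ y in G, fex (x, y))
      = c₁ * (volume (E ∩ Ioo 0 1)).toReal + c₂ * (volume (E ∩ Ioo 1 2)).toReal := by
    have : (fun x => ∫ y in G, fex (x, y)) = fun x =>
        c₁ * Set.indicator (Ioo (0:ℝ) 1) 1 x + c₂ * Set.indicator (Ioo (1:ℝ) 2) 1 x := by
      funext x; exact inner_int G x
    rw [this]
    rw [MeasureTheory.integral_add
      (((integrable_ind_on E (Ioo 0 1) measurableSet_Ioo (by simp)).const_mul c₁))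
      (((integrable_ind_on E (Ioo 1 2) measurableSet_Ioo (by simp)).const_mul c₂)),
      MeasureTheory.integral_const_mul, MeasureTheory.integral_const_mul,
      integral_ind E _ measurableSet_Ioo, integral_ind E _ measurableSet_Ioo]
  rw [key]
  have hf1 : volume (G ∩ Ioo (0:ℝ) 1) ≠ ⊤ :=
    (lt_of_le_of_lt (measure_mono Set.inter_subset_right) (by simp)).ne
  have hf2 : volume (G ∩ Ioo (1:ℝ) 2) ≠ ⊤ :=
    (lt_of_le_of_lt (measure_mono Set.inter_subset_right) (by simp)).ne
  have he1 : volume (E ∩ Ioo (0:ℝ) 1) ≠ ⊤ :=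
    (lt_of_le_of_lt (measure_mono Set.inter_subset_right) (by simp)).ne
  have he2 : volume (E ∩ Ioo (1:ℝ) 2) ≠ ⊤ :=
    (lt_of_le_of_lt (measure_mono Set.inter_subset_right) (by simp)).ne
  have hτ1 : (0:ℝ) ≤ 2*τ - 1 := by linarith [hτ.1]
  have hb1 : 2*τ - 1 ≤ c₁ := by
    have hcover : G ⊆ (G ∩ Ioo 0 1) ∪ (G ∩ Ico 1 2) := by
      intro x hx
      rcases lt_or_ge x 1 with h | h
      · exact Or.inl ⟨hx, (hGs hx).1, h⟩
      · exact Or.inr ⟨hx, h, (hGs hx).2⟩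
    have : ENNReal.ofReal (2*τ) ≤ volume (G ∩ Ioo 0 1) + 1 := by
      calc ENNReal.ofReal (2*τ) = volume G := hGv.symm
        _ ≤ volume (G ∩ Ioo 0 1) + volume (G ∩ Ico 1 2) :=
            le_trans (measure_mono hcover) (measure_union_le _ _)
        _ ≤ volume (G ∩ Ioo 0 1) + 1 := by
            gcongr
            calc volume (G ∩ Ico (1:ℝ) 2) ≤ volume (Ico (1:ℝ) 2) :=
                measure_mono Set.inter_subset_right
              _ = 1 := by rw [Real.volume_Ico]; norm_num
    have h2 : ENNReal.ofReal (2*τ - 1) ≤ volume (G ∩ Ioo 0 1) := by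
      rw [show ENNReal.ofReal (2*τ-1) = ENNReal.ofReal (2*τ) - ENNReal.ofReal 1 from
        (ENNReal.ofReal_sub _ (by norm_num)), ENNReal.ofReal_one]
      exact tsub_le_iff_right.2 this
    rw [hc₁]
    exact (ENNReal.ofReal_le_iff_le_toReal hf1).1 h2
  have hb2 : 2*τ - 1 ≤ c₂ := by
    have hcover : G ⊆ (G ∩ Ioc 0 1) ∪ (G ∩ Ioo 1 2) := by
      intro x hx
      rcases le_or_gt x 1 with h | h
      · exact Or.inl ⟨hx, (hGs hx).1, h⟩
      · exact Or.inr ⟨hx, h, (hGs hx).2⟩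
    have : ENNReal.ofReal (2*τ) ≤ volume (G ∩ Ioo 1 2) + 1 := by
      calc ENNReal.ofReal (2*τ) = volume G := hGv.symm
        _ ≤ volume (G ∩ Ioc 0 1) + volume (G ∩ Ioo 1 2) :=
            le_trans (measure_mono hcover) (measure_union_le _ _)
        _ ≤ 1 + volume (G ∩ Ioo 1 2) := by
            gcongr
            calc volume (G ∩ Ioc (0:ℝ) 1) ≤ volume (Ioc (0:ℝ) 1) :=
                measure_mono Set.inter_subset_right
              _ = 1 := by rw [Real.volume_Ioc]; norm_num
        _ = volume (G ∩ Ioo 1 2) + 1 := add_comm _ _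
    have h2 : ENNReal.ofReal (2*τ - 1) ≤ volume (G ∩ Ioo 1 2) := by
      rw [show ENNReal.ofReal (2*τ-1) = ENNReal.ofReal (2*τ) - ENNReal.ofReal 1 from
        (ENNReal.ofReal_sub _ (by norm_num)), ENNReal.ofReal_one]
      exact tsub_le_iff_right.2 this
    rw [hc₂]
    exact (ENNReal.ofReal_le_iff_le_toReal hf2).1 h2
  have hEsum : (volume (E ∩ Ioo 0 1)).toReal + (volume (E ∩ Ioo 1 2)).toReal = 2*lam := by
    have hdisj : Disjoint (E ∩ Ioo (0:ℝ) 1) (E ∩ Ioo 1 2) := by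
      rw [Set.disjoint_iff]
      rintro x ⟨⟨_, h1⟩, ⟨_, h2⟩⟩
      simp only [mem_Ioo] at h1 h2
      exact absurd (h1.2.trans h2.1) (lt_irrefl x)
    have hle : volume (E ∩ Ioo 0 1) + volume (E ∩ Ioo 1 2) ≤ volume E := by
      rw [← measure_union hdisj (hEm.inter measurableSet_Ioo)]
      exact measure_mono (Set.union_subset Set.inter_subset_left Set.inter_subset_left)
    have hge : volume E ≤ volume (E ∩ Ioo 0 1) + volume (E ∩ Ioo 1 2) := by
      have hcover : E ⊆ (E ∩ Ioo 0 1) ∪ ((E ∩ {(1:ℝ)}) ∪ (E ∩ Ioo 1 2)) := by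
        intro x hx
        rcases lt_trichotomy x 1 with h | h | h
        · exact Or.inl ⟨hx, (hEs hx).1, h⟩
        · exact Or.inr (Or.inl ⟨hx, h⟩)
        · exact Or.inr (Or.inr ⟨hx, h, (hEs hx).2⟩)
      calc volume E ≤ volume (E ∩ Ioo 0 1) + (volume (E ∩ {(1:ℝ)}) + volume (E ∩ Ioo 1 2)) :=
            le_trans (measure_mono hcover)
              (le_trans (measure_union_le _ _) (by gcongr; exact measure_union_le _ _))
        _ = volume (E ∩ Ioo 0 1) + volume (E ∩ Ioo 1 2) := by
            have : volume (E ∩ {(1:ℝ)}) = 0 :=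
              le_antisymm (le_trans (measure_mono Set.inter_subset_right) (by simp)) zero_le
            rw [this, zero_add]
    have heq : volume (E ∩ Ioo 0 1) + volume (E ∩ Ioo 1 2) = ENNReal.ofReal (2*lam) := by
      rw [← hEv]; exact le_antisymm hle hge
    have := congrArg ENNReal.toReal heq
    rw [ENNReal.toReal_add he1 he2] at this
    rw [this, ENNReal.toReal_ofReal (by linarith [hlam.1])]
  have hv1 : (0:ℝ) ≤ (volume (E ∩ Ioo 0 1)).toReal := ENNReal.toReal_nonneg
  have hv2 : (0:ℝ) ≤ (volume (E ∩ Ioo 1 2)).toReal := ENNReal.toReal_nonneg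
  nlinarith [mul_le_mul_of_nonneg_right hb1 hv1, mul_le_mul_of_nonneg_right hb2 hv2]

theorem stmt_8 :
    (∀ t ∈ Ioo (0:ℝ) 1, ∀ s ∈ Ioo (0:ℝ) 2,
      rearr2On (Ioo (0:ℝ) 2) (Ioo (0:ℝ) 2) fex t s = 1) ∧
    (∀ t ∈ Ico (1:ℝ) 2, ∀ s ∈ Ioo (0:ℝ) 2,
      rearr2On (Ioo (0:ℝ) 2) (Ioo (0:ℝ) 2) fex t s = 0) ∧
    (∀ lam ∈ Ioc (0:ℝ) (1/2), ∀ τ ∈ Ioo (1/2 : ℝ) 1,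
      (∫ t in Ioo (2*(1-lam)) 2, ∫ s in Ioo (2*(1-τ)) 2,
        rearr2On (Ioo (0:ℝ) 2) (Ioo (0:ℝ) 2) fex t s) = 0 ∧
      0 < sInf {I : ℝ | ∃ E G : Set ℝ,
        MeasurableSet E ∧ E ⊆ Ioo (0:ℝ) 2 ∧ volume E = ENNReal.ofReal (2*lam) ∧
        MeasurableSet G ∧ G ⊆ Ioo (0:ℝ) 2 ∧ volume G = ENNReal.ofReal (2*τ) ∧
        I = ∫ x in E, ∫ y in G, fex (x, y)}) := by
  refine ⟨fun t ht s hs => part1 t ht s hs, fun t ht s _ => part2 t ht.1 s, ?_⟩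
  intro lam hlam τ hτ
  constructor
  · have hzero : ∀ t ∈ Ioo (2*(1-lam)) 2,
        (∫ s in Ioo (2*(1-τ)) 2, rearr2On (Ioo (0:ℝ) 2) (Ioo (0:ℝ) 2) fex t s) = 0 := by
      intro t ht
      have h1 : 1 ≤ t := by
        have h2 := ht.1
        have := hlam.2
        nlinarith
      have : ∀ s, rearr2On (Ioo (0:ℝ) 2) (Ioo (0:ℝ) 2) fex t s = 0 := part2 t h1
      simp [this]
    rw [MeasureTheory.setIntegral_congr_fun measurableSet_Ioo
      (fun t ht => hzero t ht : EqOn _ (fun _ => (0:ℝ)) _)]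
    simp
  · set A := {I : ℝ | ∃ E G : Set ℝ,
        MeasurableSet E ∧ E ⊆ Ioo (0:ℝ) 2 ∧ volume E = ENNReal.ofReal (2*lam) ∧
        MeasurableSet G ∧ G ⊆ Ioo (0:ℝ) 2 ∧ volume G = ENNReal.ofReal (2*τ) ∧
        I = ∫ x in E, ∫ y in G, fex (x, y)} with hA
    have hne : A.Nonempty := by
      refine ⟨_, Ioo 0 (2*lam), Ioo 0 (2*τ), measurableSet_Ioo, ?_, ?_,
        measurableSet_Ioo, ?_, ?_, rfl⟩
      · intro x hx
        exact ⟨hx.1, lt_of_lt_of_le hx.2 (by linarith [hlam.2])⟩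
      · rw [Real.volume_Ioo]; norm_num
      · intro x hx
        exact ⟨hx.1, lt_of_lt_of_le hx.2 (by linarith [hτ.2])⟩
      · rw [Real.volume_Ioo]; norm_num
    have hlb : ∀ I ∈ A, 2*lam*(2*τ-1) ≤ I := by
      rintro I ⟨E, G, hEm, hEs, hEv, hGm, hGs, hGv, rfl⟩
      exact lower_bound lam τ hlam hτ E G hEm hEs hEv hGm hGs hGv
    have hpos : (0:ℝ) < 2*lam*(2*τ-1) := by
      have := hlam.1; have := hτ.1
      nlinarith
    exact lt_of_lt_of_le hpos (le_csInf hne hlb)
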